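/- Let w be a finite square-free word with restriction sequence r_0 ≺ r_1 ≺ ⋯ ≺ r_{m−1} (all square-free words of the form w[:j]·k with 0 ≤ j < |w| and 0 ≤ k < w[j], in lexicographic order), let v_i = max(w)+i+1, and define x_0 = v_0 and x_{i+1} = v_{i+1} · x_i · r_i · x_i. Then for every 0 ≤ i ≤ m, x_i = V_i · φ_w(R_i[:−1]), where V_i = v_i v_{i−1} ⋯ v_1 v_0, φ_w is the morphism sending letter k to r_k·V_k, and R_i := ρ^i(0). -/

import Mathlib

def rho (w : List ℕ) : List ℕ := w.flatMap (fun n => [0, n + 1])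

def R (n : ℕ) : List ℕ := rho^[n] [0]

lemma rho_append (a b : List ℕ) : rho (a ++ b) = rho a ++ rho b := by
  simp [rho]

lemma R_succ (i : ℕ) : R (i + 1) = rho (R i) := by
  simp [R, Function.iterate_succ_apply']

lemma R_last : ∀ i, R i = (R i).dropLast ++ [i] := by
  intro i
  induction i with
  | zero => simp [R]
  | succ i ih =>
    rw [R_succ, ih, rho_append]
    show _ = (rho (R i).dropLast ++ [0, i+1]).dropLast ++ _
    rw [show ([0, i+1] : List ℕ) = [0] ++ [i+1] by rfl, ← List.append_assoc,
      List.dropLast_concat]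
    simp [rho]

lemma R_succ_dropLast (i : ℕ) : (R (i+1)).dropLast = rho ((R i).dropLast) ++ [0] := by
  conv_lhs => rw [R_succ, R_last i, rho_append]
  show (rho (R i).dropLast ++ [0, i+1]).dropLast = _
  rw [show ([0, i+1] : List ℕ) = [0] ++ [i+1] by rfl, ← List.append_assoc,
    List.dropLast_concat]

lemma keyA : ∀ i, rho ((R i).dropLast) ++ [0] = R i ++ (R i).dropLast := by
  intro i
  induction i with
  | zero => simp [R, rho]
  | succ i ih =>
    rw [R_succ_dropLast, ih, rho_append, List.append_assoc, ih, R_succ]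
lemma R_succ_dropLast' (i : ℕ) : (R (i+1)).dropLast = R i ++ (R i).dropLast := by
  rw [R_succ_dropLast, keyA]



def SqFree (w : List ℕ) : Prop := ∀ y : List ℕ, y ≠ [] → ¬ (y ++ y) <:+: w

/-- The maximum letter of a finite word. -/
def maxL (w : List ℕ) : ℕ := w.foldr max 0

/-- v is a restriction of w: v = w[:j]·k with j < |w| and k < w[j]. -/
def Restriction (w v : List ℕ) : Prop :=
  ∃ j, j < w.length ∧ ∃ k, k < w.getD j 0 ∧ v = w.take j ++ [k]

/-- V_i = v_i v_{i−1} ⋯ v_1 v_0 where v_j = max(w) + j + 1. -/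
def Vw (w : List ℕ) (i : ℕ) : List ℕ :=
  (List.range (i + 1)).reverse.map (fun j => maxL w + j + 1)

lemma Vw_succ (w : List ℕ) (i : ℕ) :
    Vw w (i+1) = (maxL w + (i+1) + 1) :: Vw w i := by
  simp [Vw, List.range_succ]

/-- Lemma 7.1: with r₀ ≺ ⋯ ≺ r_{m−1} the restriction sequence of the square-free
word w, v_i = max(w)+i+1, x₀ = v₀ and x_{i+1} = v_{i+1}·x_i·r_i·x_i, we have
x_i = V_i · φ_w(R_i[:−1]) for 0 ≤ i ≤ m, where φ_w(k) = r_k·V_k. -/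
theorem x_structure (w : List ℕ) (hw : SqFree w) (m : ℕ) (r : ℕ → List ℕ)
    (hr1 : ∀ i < m, Restriction w (r i) ∧ SqFree (r i))
    (hr2 : ∀ v : List ℕ, Restriction w v → SqFree v → ∃ i < m, r i = v)
    (hr3 : ∀ i j, i < j → j < m → List.Lex (· < ·) (r i) (r j))
    (x : ℕ → List ℕ)
    (hx0 : x 0 = [maxL w + 1])
    (hxs : ∀ i, x (i + 1) = (maxL w + i + 2) :: (x i ++ r i ++ x i)) :
    ∀ i ≤ m, x i = Vw w i ++ (R i).dropLast.flatMap (fun k => r k ++ Vw w k) := by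
  have main : ∀ i, x i = Vw w i ++ (R i).dropLast.flatMap (fun k => r k ++ Vw w k) := by
    intro i
    induction i with
    | zero => simp [hx0, R, Vw, List.range_succ]
    | succ i ih =>
      rw [hxs, ih, R_succ_dropLast', Vw_succ]
      conv_rhs => rw [R_last i]
      simp [List.flatMap_append, List.append_assoc]
      omega
  exact fun i _ => main i
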